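/- Let p be an odd prime with p ≡ 3 (mod 4). Then the number of t ∈ F_p \ {0,1} such that 1 - t is a nonzero square in F_p and t is a square in F_p equals half the number of t ∈ F_p \ {0,1} such that 1 - t is a nonzero square in F_p. -/

import Mathlib

section Aux
variable (p : ℕ) [Fact p.Prime]

lemma aux_key (h3 : p % 4 = 3) {t : ZMod p} (ht0 : t ≠ 0) (ht1 : t ≠ 1)
    (hsq : IsSquare (1 - t)) : IsSquare (t / (t - 1)) ↔ ¬ IsSquare t := by
  have h1t : (1 : ZMod p) - t ≠ 0 := sub_ne_zero.mpr (Ne.symm ht1)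
  have ht1' : t - 1 ≠ 0 := sub_ne_zero.mpr ht1
  set χ := quadraticChar (ZMod p) with hχ
  have hneg : χ (-1) = -1 :=
    quadraticChar_neg_one_iff_not_isSquare.mpr
      (by rw [ZMod.exists_sq_eq_neg_one_iff]; omega)
  have hinv : IsSquare ((1 - t)⁻¹) := by
    obtain ⟨a, ha⟩ := hsq
    exact ⟨a⁻¹, by rw [ha, mul_inv]⟩
  have hinvne : ((1 : ZMod p) - t)⁻¹ ≠ 0 := inv_ne_zero h1t
  have hinv1 : χ ((1 - t)⁻¹) = 1 := (quadraticChar_one_iff_isSquare hinvne).mpr hinv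
  have hprod : t / (t - 1) * t = -1 * t ^ 2 * (1 - t)⁻¹ := by
    field_simp
    ring
  have hσne : t / (t - 1) ≠ 0 := div_ne_zero ht0 ht1'
  have hmul : χ (t / (t - 1)) * χ t = -1 := by
    rw [← map_mul, hprod, map_mul, map_mul, hneg, hinv1, map_pow, mul_one]
    have h2 : χ t ^ 2 = 1 := quadraticChar_sq_one (F := ZMod p) ht0
    rw [h2]
    ring
  constructor
  · intro hS hT
    rw [(quadraticChar_one_iff_isSquare hσne).mpr hS,
      (quadraticChar_one_iff_isSquare ht0).mpr hT] at hmul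
    norm_num at hmul
  · intro hT
    have h1 : χ t = -1 := quadraticChar_neg_one_iff_not_isSquare.mpr hT
    rw [h1] at hmul
    have : χ (t / (t - 1)) = 1 := by linarith [hmul]
    exact (quadraticChar_one_iff_isSquare hσne).mp this

end Aux

/-- For `p ≡ 3 (mod 4)`, among `t ∈ F_p \ {0,1}` with `1-t` a nonzero square, exactly half
are themselves squares. -/
theorem half_are_squares (p : ℕ) [Fact p.Prime] (h3 : p % 4 = 3) :
    2 * (Finset.univ.filter fun t : ZMod p =>
        t ≠ 0 ∧ t ≠ 1 ∧ 1 - t ≠ 0 ∧ IsSquare (1 - t) ∧ IsSquare t).card =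
      (Finset.univ.filter fun t : ZMod p =>
        t ≠ 0 ∧ t ≠ 1 ∧ 1 - t ≠ 0 ∧ IsSquare (1 - t)).card := by
  classical
  set B := Finset.univ.filter fun t : ZMod p =>
      t ≠ 0 ∧ t ≠ 1 ∧ 1 - t ≠ 0 ∧ IsSquare (1 - t) with hB
  set A := Finset.univ.filter fun t : ZMod p =>
      t ≠ 0 ∧ t ≠ 1 ∧ 1 - t ≠ 0 ∧ IsSquare (1 - t) ∧ IsSquare t with hA
  have hAeq : B.filter (fun t => IsSquare t) = A := by
    ext t
    simp only [hA, hB, Finset.mem_filter, Finset.mem_univ, true_and]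
    tauto
  have hsplit : A.card + (B.filter fun t => ¬ IsSquare t).card = B.card := by
    rw [← hAeq]
    exact Finset.card_filter_add_card_filter_not _
  have hcard : (B.filter fun t => ¬ IsSquare t).card = A.card := by
    apply Finset.card_bij (fun t _ => t / (t - 1))
    · -- maps into A
      intro t ht
      simp only [hB, Finset.mem_filter, Finset.mem_univ, true_and] at ht
      obtain ⟨⟨ht0, ht1, h1t, hsq⟩, hns⟩ := ht
      have ht1' : t - 1 ≠ 0 := sub_ne_zero.mpr ht1
      have hσ0 : t / (t - 1) ≠ 0 := div_ne_zero ht0 ht1'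
      have hσ1 : t / (t - 1) ≠ 1 := by
        intro h
        rw [div_eq_one_iff_eq ht1'] at h
        have h' : (1 : ZMod p) = 0 := by linear_combination h
        simp at h'
      have h1σ : 1 - t / (t - 1) = (1 - t)⁻¹ := by
        have hm : (1 - t / (t - 1)) * (1 - t) = 1 := by field_simp; ring
        exact eq_inv_of_mul_eq_one_left hm
      have hinv : IsSquare ((1 - t)⁻¹) := by
        obtain ⟨a, ha⟩ := hsq
        exact ⟨a⁻¹, by rw [ha, mul_inv]⟩
      simp only [hA, Finset.mem_filter, Finset.mem_univ, true_and]
      refine ⟨hσ0, hσ1, ?_, ?_, ?_⟩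
      · rw [h1σ]; exact inv_ne_zero h1t
      · rw [h1σ]; exact hinv
      · exact (aux_key p h3 ht0 ht1 hsq).mpr hns
    · -- injective
      intro t ht s hs h
      simp only [hB, Finset.mem_filter, Finset.mem_univ, true_and] at ht hs
      have ht1' : t - 1 ≠ 0 := sub_ne_zero.mpr ht.1.2.1
      have hs1' : s - 1 ≠ 0 := sub_ne_zero.mpr hs.1.2.1
      field_simp at h
      linear_combination -h
    · -- surjective
      intro s hsA
      simp only [hA, Finset.mem_filter, Finset.mem_univ, true_and] at hsA
      obtain ⟨hs0, hs1, h1s, hsq, hssq⟩ := hsA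
      have hs1' : s - 1 ≠ 0 := sub_ne_zero.mpr hs1
      have hσ0 : s / (s - 1) ≠ 0 := div_ne_zero hs0 hs1'
      have hσ1 : s / (s - 1) ≠ 1 := by
        intro h
        rw [div_eq_one_iff_eq hs1'] at h
        have h' : (1 : ZMod p) = 0 := by linear_combination h
        simp at h'
      have h1σ : 1 - s / (s - 1) = (1 - s)⁻¹ := by
        have hm : (1 - s / (s - 1)) * (1 - s) = 1 := by field_simp; ring
        exact eq_inv_of_mul_eq_one_left hm
      have hinv : IsSquare ((1 - s)⁻¹) := by
        obtain ⟨a, ha⟩ := hsq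
        exact ⟨a⁻¹, by rw [ha, mul_inv]⟩
      have hσ1' : s / (s - 1) - 1 ≠ 0 := sub_ne_zero.mpr hσ1
      have hσσ : s / (s - 1) / (s / (s - 1) - 1) = s := by
        field_simp
        ring

      refine ⟨s / (s - 1), ?_, hσσ⟩
      simp only [hB, Finset.mem_filter, Finset.mem_univ, true_and]
      refine ⟨⟨hσ0, hσ1, ?_, ?_⟩, ?_⟩
      · rw [h1σ]; exact inv_ne_zero h1s
      · rw [h1σ]; exact hinv
      · rw [← aux_key p h3 hσ0 hσ1 (by rw [h1σ]; exact hinv), hσσ]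
        exact hssq
  omega
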